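/- Assume 0 < ν < 1 and βʲ ≥ βⁱ > 0. Define the best-response threshold maps BRⁱ(ψ) = T if ν < e^{−βʲψ} and BRⁱ(ψ) = min{ −(ln ν)/βʲ , T } otherwise, and BRʲ(ψ) = T if ν < e^{−βⁱψ} and BRʲ(ψ) = min{ −(ln ν)/βⁱ , T } otherwise. Then there is exactly one pair (ψⁱ, ψʲ) ∈ [0,T]² with ψⁱ = BRⁱ(ψʲ) and ψʲ = BRʲ(ψⁱ); it equals (min{−(ln ν)/βʲ, T}, min{−(ln ν)/βⁱ, T}) when βⁱ = βʲ, and (min{−(ln ν)/βʲ, T}, T) when βʲ > βⁱ. (Uniqueness of the mutual-best-response threshold pair, claimed after the paper's Theorem 3.) -/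
import Mathlib


open Real Set

lemma cond_iff_aux {ν β ψ : ℝ} (hν : 0 < ν) (hβ : 0 < β) :
    ν < Real.exp (-(β * ψ)) ↔ ψ < -Real.log ν / β := by
  rw [lt_div_iff₀ hβ]
  nth_rewrite 1 [← Real.exp_log hν]
  rw [Real.exp_lt_exp]
  constructor <;> intro h <;> nlinarith [mul_comm ψ β]

/-- Uniqueness of the mutual-best-response threshold pair, claimed after the
paper's Theorem 3.  With `BRⁱ(ψ) = T` if `ν < e^{−βʲψ}` and
`min{−(ln ν)/βʲ, T}` otherwise (and symmetrically `BRʲ` with `βⁱ`), there is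
exactly one pair `(ψⁱ, ψʲ) ∈ [0,T]²` with `ψⁱ = BRⁱ(ψʲ)` and
`ψʲ = BRʲ(ψⁱ)`; it equals `(min{−(ln ν)/βʲ, T}, min{−(ln ν)/βⁱ, T})` when
`βⁱ = βʲ`, and `(min{−(ln ν)/βʲ, T}, T)` when `βʲ > βⁱ`. -/
theorem unique_mutual_best_response_thresholds
    (T ν βi βj : ℝ) (hT : 0 < T) (hν0 : 0 < ν) (hν1 : ν < 1)
    (hβi : 0 < βi) (hβij : βi ≤ βj)
    (BRi BRj : ℝ → ℝ)
    (hBRi : ∀ ψ : ℝ, BRi ψ =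
      if ν < Real.exp (-(βj * ψ)) then T else min (-(Real.log ν) / βj) T)
    (hBRj : ∀ ψ : ℝ, BRj ψ =
      if ν < Real.exp (-(βi * ψ)) then T else min (-(Real.log ν) / βi) T)
    (P : ℝ × ℝ)
    (hP : P = if βi = βj
      then (min (-(Real.log ν) / βj) T, min (-(Real.log ν) / βi) T)
      else (min (-(Real.log ν) / βj) T, T)) :
    (P.1 ∈ Icc (0:ℝ) T ∧ P.2 ∈ Icc (0:ℝ) T ∧ P.1 = BRi P.2 ∧ P.2 = BRj P.1) ∧
    (∀ ψi ψj : ℝ, ψi ∈ Icc (0:ℝ) T → ψj ∈ Icc (0:ℝ) T →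
      ψi = BRi ψj → ψj = BRj ψi → (ψi, ψj) = P) := by
  have hβj : 0 < βj := lt_of_lt_of_le hβi hβij
  have hlogν : Real.log ν < 0 := Real.log_neg hν0 hν1
  have hL : 0 < -Real.log ν := by linarith
  set L : ℝ := -Real.log ν with hLdef
  have hBRi' : ∀ ψ : ℝ, BRi ψ = if ψ < L / βj then T else min (L / βj) T := by
    intro ψ
    rw [hBRi ψ]
    by_cases h : ψ < L / βj
    · rw [if_pos ((cond_iff_aux hν0 hβj).2 h), if_pos h]
    · rw [if_neg (fun hc => h ((cond_iff_aux hν0 hβj).1 hc)), if_neg h]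
  have hBRj' : ∀ ψ : ℝ, BRj ψ = if ψ < L / βi then T else min (L / βi) T := by
    intro ψ
    rw [hBRj ψ]
    by_cases h : ψ < L / βi
    · rw [if_pos ((cond_iff_aux hν0 hβi).2 h), if_pos h]
    · rw [if_neg (fun hc => h ((cond_iff_aux hν0 hβi).1 hc)), if_neg h]
  have hLj : 0 < L / βj := div_pos hL hβj
  have hLi : 0 < L / βi := div_pos hL hβi
  have hji : L / βj ≤ L / βi := by gcongr
  have hmiIcc : min (L / βj) T ∈ Icc (0:ℝ) T :=
    ⟨le_min hLj.le hT.le, min_le_right _ _⟩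
  have hmjIcc : min (L / βi) T ∈ Icc (0:ℝ) T :=
    ⟨le_min hLi.le hT.le, min_le_right _ _⟩
  rcases eq_or_lt_of_le hβij with heq | hlt
  · -- equal rates
    subst heq
    rw [if_pos rfl] at hP
    subst hP
    have key : BRi (min (L / βi) T) = min (L / βi) T := by
      rw [hBRi']
      split_ifs with h
      · rcases min_lt_iff.1 h with h' | h'
        · exact absurd h' (lt_irrefl _)
        · exact (min_eq_right h'.le).symm
      · rfl
    have keyj : BRj (min (L / βi) T) = min (L / βi) T := by
      rw [hBRj']
      split_ifs with h
      · rcases min_lt_iff.1 h with h' | h'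
        · exact absurd h' (lt_irrefl _)
        · exact (min_eq_right h'.le).symm
      · rfl
    refine ⟨⟨hmiIcc, hmjIcc, key.symm, keyj.symm⟩, ?_⟩
    intro ψi ψj _ _ hi hj
    rw [hBRi'] at hi; rw [hBRj'] at hj
    split_ifs at hi hj with h1 h2 h2
    · -- ψi = T, ψj = T, with T < L/βi
      have h1' : T < L / βi := hj ▸ h1
      rw [hi, hj, min_eq_right h1'.le]
    · -- ψi = T, ψj = min; contradiction
      exfalso
      have h2' : L / βi ≤ T := le_of_not_gt (hi ▸ h2)
      rw [hj, min_eq_left h2'] at h1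
      exact lt_irrefl _ h1
    · -- ψi = min, ψj = T; contradiction
      exfalso
      have h1' : L / βi ≤ T := le_of_not_gt (hj ▸ h1)
      rw [hi, min_eq_left h1'] at h2
      exact lt_irrefl _ h2
    · rw [hi, hj]
  · -- βi < βj
    have hne : βi ≠ βj := ne_of_lt hlt
    rw [if_neg hne] at hP
    subst hP
    have hji' : L / βj < L / βi := by gcongr
    have hfix1 : BRi T = min (L / βj) T := by
      rw [hBRi']
      split_ifs with h
      · exact (min_eq_right h.le).symm
      · rfl
    have hfix2 : BRj (min (L / βj) T) = T := by
      rw [hBRj', if_pos (lt_of_le_of_lt (min_le_left _ _) hji')]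
    refine ⟨⟨hmiIcc, ⟨hT.le, le_refl T⟩, hfix1.symm, hfix2.symm⟩, ?_⟩
    intro ψi ψj _ _ hi hj
    rw [hBRi'] at hi; rw [hBRj'] at hj
    split_ifs at hi hj with h1 h2 h2
    · -- ψi = T, ψj = T
      have h1' : T < L / βj := hj ▸ h1
      rw [hi, hj, min_eq_right h1'.le]
    · -- ψi = T, ψj = min (L/βi) T; contradiction
      exfalso
      have h2' : L / βi ≤ T := le_of_not_gt (hi ▸ h2)
      rw [hj, min_eq_left h2'] at h1
      exact absurd h1 (not_lt.2 hji'.le)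
    · -- ψi = min (L/βj) T, ψj = T
      rw [hi, hj]
    · -- both min; contradiction
      exfalso
      have h2' : L / βi ≤ min (L / βj) T := le_of_not_gt (hi ▸ h2)
      have := h2'.trans (min_le_left _ _)
      linarith
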